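/- arXiv:1406.0786 — 2 statements merged into one kernel-verified Lean document; each statement's English description precedes it below -/
import Mathlib

section
/- The multiplicity of the sign representation of $\mathcal{S}_k$ in the permutation representation $\mathbb{Q}\,\mathcal{F}([n],[k])$ (where $\mathcal{S}_k$ acts by postcomposition on the set of all functions from $[n]$ to $[k]$) equals $S(n,k-1) + S(n,k)$, where $S(n,j)$ denotes the Stirling number of the second kind. -/
/-- Stirling numbers of the second kind: `stirling2 n j` counts the partitions of an
`n`-element set into exactly `j` nonempty blocks. -/
def stirling2 : ℕ → ℕ → ℕ
  | 0, 0 => 1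
  | 0, _ + 1 => 0
  | _ + 1, 0 => 0
  | n + 1, j + 1 => (j + 1) * stirling2 n (j + 1) + stirling2 n j

/-- The action of `S_k` on functions `[n] → [k]` by postcomposition. -/
instance postcompAction (n k : ℕ) : MulAction (Equiv.Perm (Fin k)) (Fin n → Fin k) where
  smul σ f := ⇑σ ∘ f
  one_smul f := rfl
  mul_smul σ τ f := rfl

/-- The sign-isotypic subspace of a permutation representation `ℚX` of `S_k`. -/
def signIsotypic (k : ℕ) (X : Type*) [MulAction (Equiv.Perm (Fin k)) X] :
    Submodule ℚ (X → ℚ) where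
  carrier := {v | ∀ (σ : Equiv.Perm (Fin k)) (x : X),
    v (σ • x) = ((Equiv.Perm.sign σ : ℤ) : ℚ) * v x}
  add_mem' := by
    intro a b ha hb σ x
    simp only [Pi.add_apply, ha σ x, hb σ x]
    ring
  zero_mem' := by intro σ x; simp
  smul_mem' := by
    intro c a ha σ x
    simp only [Pi.smul_apply, smul_eq_mul, ha σ x]
    ring

namespace SignMult

open Finset

variable {n k : ℕ}

/-- restricted growth condition -/
def IsRGS (f : Fin n → Fin k) : Prop :=
  ∀ i : Fin n, ∀ c : Fin k, c < f i → ∃ j, j < i ∧ f j = c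

instance : DecidablePred (IsRGS (n := n) (k := k)) := fun f => by
  unfold IsRGS; infer_instance

def img (f : Fin n → Fin k) : Finset (Fin k) := Finset.image f Finset.univ

lemma mem_img {f : Fin n → Fin k} {c : Fin k} : c ∈ img f ↔ ∃ i, f i = c := by
  simp [img]

lemma img_card_le (f : Fin n → Fin k) : (img f).card ≤ k := by
  simpa using card_le_card (subset_univ (img f))

/-- a downward-closed finset of `Fin k` is an initial segment. -/
lemma dc_mem_iff {s : Finset (Fin k)} (h : ∀ a b : Fin k, a < b → b ∈ s → a ∈ s)
    {x : Fin k} : x ∈ s ↔ (x : ℕ) < s.card := by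
  constructor
  · intro hx
    have hsub : Finset.Iic x ⊆ s := by
      intro y hy
      rcases lt_or_eq_of_le (Finset.mem_Iic.1 hy) with h' | h'
      · exact h y x h' hx
      · exact h' ▸ hx
    have := card_le_card hsub
    rwa [Fin.card_Iic, Nat.add_one_le_iff] at this
  · intro hx
    by_contra hxs
    have hsub : s ⊆ Finset.Iio x := by
      intro y hy
      rcases lt_trichotomy y x with h' | h' | h'
      · exact Finset.mem_Iio.2 h'
      · exact absurd (h' ▸ hy) hxs
      · exact absurd (h x y h' hy) hxs
    have := card_le_card hsub
    rw [Fin.card_Iio] at this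
    omega

lemma img_dc {f : Fin n → Fin k} (hf : IsRGS f) :
    ∀ a b : Fin k, a < b → b ∈ img f → a ∈ img f := by
  intro a b hab hb
  obtain ⟨i, hi⟩ := mem_img.1 hb
  obtain ⟨j, _, hj⟩ := hf i a (by rwa [hi])
  exact mem_img.2 ⟨j, hj⟩

lemma mem_img_iff {f : Fin n → Fin k} (hf : IsRGS f) {x : Fin k} :
    x ∈ img f ↔ (x : ℕ) < (img f).card := dc_mem_iff (img_dc hf)

lemma img_snoc (g : Fin n → Fin k) (c : Fin k) :
    img (Fin.snoc g c) = insert c (img g) := by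
  ext x
  simp only [mem_img, Finset.mem_insert]
  constructor
  · rintro ⟨i, hi⟩
    induction i using Fin.lastCases with
    | last => exact .inl (by rw [← hi, Fin.snoc_last])
    | cast j => exact .inr ⟨j, by rwa [Fin.snoc_castSucc] at hi⟩
  · rintro (rfl | ⟨i, hi⟩)
    · exact ⟨Fin.last n, Fin.snoc_last _ _⟩
    · exact ⟨i.castSucc, by rwa [Fin.snoc_castSucc]⟩

lemma isRGS_snoc {g : Fin n → Fin k} {c : Fin k} :
    IsRGS (Fin.snoc g c) ↔ IsRGS g ∧ ∀ b : Fin k, b < c → b ∈ img g := by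
  constructor
  · intro h
    constructor
    · intro i b hb
      obtain ⟨j, hj, hj2⟩ := h i.castSucc b (by rwa [Fin.snoc_castSucc])
      have hjl : j ≠ Fin.last n := by
        intro hl; rw [hl] at hj
        exact absurd (lt_of_lt_of_le hj (Fin.le_last _)) (lt_irrefl _)
      refine ⟨j.castPred hjl, ?_, ?_⟩
      · have := hj; simp only [Fin.lt_def, Fin.coe_castSucc] at this ⊢
        simpa using this
      · have h2 : (Fin.snoc g c : Fin (n+1) → Fin k) ((j.castPred hjl).castSucc) = b := by
          rwa [Fin.castSucc_castPred]
        rwa [Fin.snoc_castSucc] at h2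
    · intro b hb
      obtain ⟨j, hj, hj2⟩ := h (Fin.last n) b (by rwa [Fin.snoc_last])
      have hjl : j ≠ Fin.last n := ne_of_lt hj
      refine mem_img.2 ⟨j.castPred hjl, ?_⟩
      have h2 : (Fin.snoc g c : Fin (n+1) → Fin k) ((j.castPred hjl).castSucc) = b := by
        rwa [Fin.castSucc_castPred]
      rwa [Fin.snoc_castSucc] at h2
  · rintro ⟨h1, h2⟩ i b hb
    induction i using Fin.lastCases with
    | last =>
      rw [Fin.snoc_last] at hb
      obtain ⟨j, hj⟩ := mem_img.1 (h2 b hb)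
      exact ⟨j.castSucc, Fin.castSucc_lt_last j, by rwa [Fin.snoc_castSucc]⟩
    | cast i =>
      rw [Fin.snoc_castSucc] at hb
      obtain ⟨j, hj, hj2⟩ := h1 i b hb
      exact ⟨j.castSucc, by rwa [Fin.castSucc_lt_castSucc_iff], by rwa [Fin.snoc_castSucc]⟩


lemma img_comp (σ : Equiv.Perm (Fin k)) (g : Fin n → Fin k) :
    img (⇑σ ∘ g) = (img g).image σ := by
  simp [img, Finset.image_image]

lemma img_comp_card (σ : Equiv.Perm (Fin k)) (g : Fin n → Fin k) :
    (img (⇑σ ∘ g)).card = (img g).card := by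
  rw [img_comp, Finset.card_image_of_injective _ σ.injective]

/-- every function is in the orbit of a restricted growth function. -/
lemma exists_rgs (f : Fin n → Fin k) :
    ∃ σ : Equiv.Perm (Fin k), ∃ g, IsRGS g ∧ ⇑σ ∘ g = f := by
  induction n with
  | zero =>
    exact ⟨1, f, fun i => i.elim0, by ext i; exact i.elim0⟩
  | succ n ih =>
    obtain ⟨σ, g, hg, hfg⟩ := ih (Fin.init f)
    set c : Fin k := σ⁻¹ (f (Fin.last n)) with hc
    set m := (img g).card with hm
    have hsnoc : ∀ τ : Equiv.Perm (Fin k), ∀ d : Fin k,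
        ⇑τ ∘ Fin.snoc g d = Fin.snoc (⇑τ ∘ g) (τ d) := by
      intro τ d
      ext i
      induction i using Fin.lastCases with
      | last => simp
      | cast j => simp
    by_cases hcm : (c : ℕ) ≤ m
    · refine ⟨σ, Fin.snoc g c, ?_, ?_⟩
      · refine isRGS_snoc.2 ⟨hg, fun b hb => ?_⟩
        rw [mem_img_iff hg]
        exact lt_of_lt_of_le hb hcm
      · rw [hsnoc]
        rw [hfg, hc, Equiv.Perm.inv_def, Equiv.apply_symm_apply, Fin.snoc_init_self]
    · have hmk : m < k := lt_of_le_of_lt (le_of_lt (not_le.1 hcm)) c.isLt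
      set cm : Fin k := ⟨m, hmk⟩ with hcmdef
      set τ := Equiv.swap c cm with hτ
      have hτg : ⇑τ ∘ g = g := by
        ext i
        have hi : (g i : ℕ) < m := (mem_img_iff hg).1 (mem_img.2 ⟨i, rfl⟩)
        have h1 : g i ≠ c := by
          intro h; rw [h] at hi; omega
        have h2 : g i ≠ cm := by
          intro h; rw [h] at hi; simp [hcmdef] at hi
        simp [hτ, Equiv.swap_apply_of_ne_of_ne h1 h2]
      refine ⟨σ * τ, Fin.snoc g cm, ?_, ?_⟩
      · refine isRGS_snoc.2 ⟨hg, fun b hb => ?_⟩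
        rw [mem_img_iff hg]
        exact hb
      · have : ⇑(σ * τ) = ⇑σ ∘ ⇑τ := rfl
        rw [this, Function.comp_assoc, hsnoc, hτg]
        have hτcm : τ cm = c := by simp [hτ, Equiv.swap_apply_right]
        rw [hτcm, hsnoc, hfg, hc, Equiv.Perm.inv_def, Equiv.apply_symm_apply, Fin.snoc_init_self]

/-- each orbit contains at most one restricted growth function. -/
lemma rgs_unique {g g' : Fin n → Fin k} (hg : IsRGS g) (hg' : IsRGS g')
    (σ : Equiv.Perm (Fin k)) (h : ⇑σ ∘ g = g') : g = g' := by
  have key : ∀ N, ∀ i : Fin n, (i : ℕ) < N → g i = g' i := by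
    intro N
    induction N with
    | zero => intro i hi; omega
    | succ N ih =>
      intro i hi
      by_cases hiN : (i : ℕ) < N
      · exact ih i hiN
      have hiN' : (i : ℕ) = N := by omega
      have hσi : σ (g i) = g' i := congrFun h i
      by_cases hE : ∃ j, j < i ∧ g j = g i
      · obtain ⟨j, hj, hj2⟩ := hE
        have hji : (j : ℕ) < N := by rw [← hiN']; exact hj
        have hj3 : σ (g j) = g' j := congrFun h j
        have : g' j = g' i := by rw [← hj3, hj2, hσi]
        rw [← this, ← ih j hji, hj2]
      · -- `g i` is a new value, equal to the number of distinct earlier values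
        set E : Finset (Fin k) := (univ.filter (fun j : Fin n => j < i)).image g with hEdef
        have hmemE : ∀ x : Fin k, x ∈ E ↔ ∃ j, j < i ∧ g j = x := by
          intro x; simp [hEdef]
          try tauto
        have hE' : E = (univ.filter (fun j : Fin n => j < i)).image g' := by
          apply Finset.image_congr
          intro j hj
          simp only [Finset.coe_filter, Set.mem_setOf_eq, Finset.mem_univ, true_and] at hj
          exact ih j (by rw [← hiN']; exact hj)
        have hmemE' : ∀ x : Fin k, x ∈ E ↔ ∃ j, j < i ∧ g' j = x := by
          intro x; rw [hE']; simp
          try tauto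
        have hdc : ∀ a b : Fin k, a < b → b ∈ E → a ∈ E := by
          intro a b hab hb
          obtain ⟨j, hj, hj2⟩ := (hmemE b).1 hb
          obtain ⟨j', hj', hj2'⟩ := hg j a (by rwa [hj2])
          exact (hmemE a).2 ⟨j', lt_trans hj' hj, hj2'⟩
        have hgiE : g i ∉ E := fun hmem => hE ((hmemE _).1 hmem)
        have hgiE' : g' i ∉ E := by
          intro hmem
          obtain ⟨j, hj, hj2⟩ := (hmemE' _).1 hmem
          have hj3 : σ (g j) = g' j := congrFun h j
          have : σ (g j) = σ (g i) := by rw [hj3, hj2, hσi]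
          exact hE ⟨j, hj, σ.injective this⟩
        have hval : ∀ x : Fin k, (∀ b : Fin k, b < x → b ∈ E) → x ∉ E →
            (x : ℕ) = E.card := by
          intro x hsub hx
          have h1 : ¬ ((x : ℕ) < E.card) := fun hlt => hx ((dc_mem_iff hdc).2 hlt)
          have h2 : Finset.Iio x ⊆ E := fun b hb => hsub b (Finset.mem_Iio.1 hb)
          have := card_le_card h2
          rw [Fin.card_Iio] at this
          omega
        have v1 : ((g i : ℕ)) = E.card := by
          apply hval _ _ hgiE
          intro b hb
          obtain ⟨j, hj, hj2⟩ := hg i b hb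
          exact (hmemE b).2 ⟨j, hj, hj2⟩
        have v2 : ((g' i : ℕ)) = E.card := by
          apply hval _ _ hgiE'
          intro b hb
          obtain ⟨j, hj, hj2⟩ := hg' i b hb
          exact (hmemE' b).2 ⟨j, hj, hj2⟩
        exact Fin.ext (by rw [v1, v2])
  funext i
  exact key n i i.isLt

/-- a permutation stabilizing a function whose image misses at most one point is trivial. -/
lemma stab_eq_one {g : Fin n → Fin k} (hcard : k - 1 ≤ (img g).card)
    {σ : Equiv.Perm (Fin k)} (h : ⇑σ ∘ g = g) : σ = 1 := by
  have hfix : ∀ y ∈ img g, σ y = y := by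
    intro y hy
    obtain ⟨i, rfl⟩ := mem_img.1 hy
    exact congrFun h i
  have hcompl : (univ \ img g).card ≤ 1 := by
    rw [Finset.card_sdiff_of_subset (subset_univ _), Finset.card_univ, Fintype.card_fin]
    omega
  ext x
  by_cases hx : x ∈ img g
  · exact congrArg Fin.val (hfix x hx)
  · have hσx : σ x ∉ img g := by
      intro hmem
      have := hfix (σ x) hmem
      exact hx (σ.injective this ▸ hmem)
    have h1 : x ∈ univ \ img g := Finset.mem_sdiff.2 ⟨Finset.mem_univ _, hx⟩
    have h2 : σ x ∈ univ \ img g := Finset.mem_sdiff.2 ⟨Finset.mem_univ _, hσx⟩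
    have := Finset.card_le_one.1 hcompl _ h2 _ h1
    exact congrArg Fin.val this


lemma smul_def (σ : Equiv.Perm (Fin k)) (f : Fin n → Fin k) : σ • f = ⇑σ ∘ f := rfl

/-- sign-isotypic vectors vanish on functions missing at least two values. -/
lemma vanish {v : (Fin n → Fin k) → ℚ} (hv : v ∈ signIsotypic k (Fin n → Fin k))
    {f : Fin n → Fin k} (hf : (img f).card < k - 1) : v f = 0 := by
  have hcompl : 1 < (univ \ img f).card := by
    rw [Finset.card_sdiff_of_subset (subset_univ _), Finset.card_univ, Fintype.card_fin]
    have := img_card_le f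
    omega
  obtain ⟨a, ha, b, hb, hab⟩ := Finset.one_lt_card.1 hcompl
  have ha' : a ∉ img f := (Finset.mem_sdiff.1 ha).2
  have hb' : b ∉ img f := (Finset.mem_sdiff.1 hb).2
  set σ := Equiv.swap a b with hσ
  have hσf : σ • f = f := by
    rw [smul_def]
    funext i
    have h1 : f i ≠ a := fun h => ha' (h ▸ mem_img.2 ⟨i, rfl⟩)
    have h2 : f i ≠ b := fun h => hb' (h ▸ mem_img.2 ⟨i, rfl⟩)
    exact Equiv.swap_apply_of_ne_of_ne h1 h2
  have := hv σ f
  rw [hσf, hσ, Equiv.Perm.sign_swap hab] at this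
  push_cast at this
  linarith

variable (n k) in
def Good : Finset (Fin n → Fin k) :=
  univ.filter (fun f => IsRGS f ∧ k - 1 ≤ (img f).card)

lemma mem_Good {f : Fin n → Fin k} :
    f ∈ Good n k ↔ IsRGS f ∧ k - 1 ≤ (img f).card := by
  simp [Good]

/-- restriction to the good representatives. -/
def resMap : signIsotypic k (Fin n → Fin k) →ₗ[ℚ] ({g // g ∈ Good n k} → ℚ) where
  toFun v g := v.1 g.1
  map_add' _ _ := rfl
  map_smul' _ _ := rfl

lemma res_inj : Function.Injective (resMap (n := n) (k := k)) := by
  rw [injective_iff_map_eq_zero]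
  intro v hv
  ext f
  obtain ⟨σ, g, hg, hfg⟩ := exists_rgs f
  have hcards : (img f).card = (img g).card := by rw [← hfg, img_comp_card]
  by_cases hgood : k - 1 ≤ (img g).card
  · have hmem : g ∈ Good n k := mem_Good.2 ⟨hg, hgood⟩
    have hvg : v.1 g = 0 := congrFun hv ⟨g, hmem⟩
    have := v.2 σ g
    rw [smul_def, hfg] at this
    simp only [this, hvg, mul_zero]
    rfl
  · have : v.1 f = 0 := vanish v.2 (by omega)
    simpa using this

lemma res_surj : Function.Surjective (resMap (n := n) (k := k)) := by
  classical
  intro w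
  choose σof gof hrgs hdec using exists_rgs (n := n) (k := k)
  set v : (Fin n → Fin k) → ℚ := fun f =>
    if h : k - 1 ≤ (img (gof f)).card
    then ((Equiv.Perm.sign (σof f) : ℤ) : ℚ) * w ⟨gof f, mem_Good.2 ⟨hrgs f, h⟩⟩
    else 0 with hvdef
  have hgof_eq : ∀ (σ : Equiv.Perm (Fin k)) (f : Fin n → Fin k),
      gof (σ • f) = gof f := by
    intro σ f
    have h1 : ⇑(σof (σ • f)) ∘ gof (σ • f) = σ • f := hdec _
    have h2 : ⇑(σ * σof f) ∘ gof f = σ • f := by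
      rw [smul_def]
      have hcoe : ⇑(σ * σof f) = ⇑σ ∘ ⇑(σof f) := rfl
      rw [hcoe, Function.comp_assoc, hdec f]
    have h3 : ⇑((σof (σ • f))⁻¹ * (σ * σof f)) ∘ gof f = gof (σ • f) := by
      funext i
      have e1 : σ ((σof f) (gof f i)) = (σ • f) i := congrFun h2 i
      have e2 : (σof (σ • f)) (gof (σ • f) i) = (σ • f) i := congrFun h1 i
      show (σof (σ • f))⁻¹ (σ ((σof f) (gof f i))) = gof (σ • f) i
      rw [e1, ← e2, Equiv.Perm.inv_def, Equiv.symm_apply_apply]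
    exact (rgs_unique (hrgs f) (hrgs _) _ h3).symm
  have hv : v ∈ signIsotypic k (Fin n → Fin k) := by
    intro σ f
    have hco : gof (σ • f) = gof f := hgof_eq σ f
    by_cases hgood : k - 1 ≤ (img (gof f)).card
    · have hgood' : k - 1 ≤ (img (gof (σ • f))).card := by rw [hco]; exact hgood
      -- the stabilizer is trivial, so σof (σ • f) = σ * σof f
      have h1 : ⇑(σof (σ • f)) ∘ gof f = σ • f := by rw [← hco]; exact hdec _
      have h2 : ⇑(σ * σof f) ∘ gof f = σ • f := by
        rw [smul_def]
        have hcoe : ⇑(σ * σof f) = ⇑σ ∘ ⇑(σof f) := rfl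
        rw [hcoe, Function.comp_assoc, hdec f]
      have h3 : ⇑((σof (σ • f))⁻¹ * (σ * σof f)) ∘ gof f = gof f := by
        funext i
        have e1 : σ ((σof f) (gof f i)) = (σ • f) i := congrFun h2 i
        have e2 : (σof (σ • f)) (gof f i) = (σ • f) i := congrFun h1 i
        show (σof (σ • f))⁻¹ (σ ((σof f) (gof f i))) = gof f i
        rw [e1, ← e2, Equiv.Perm.inv_def, Equiv.symm_apply_apply]
      have h4 : (σof (σ • f))⁻¹ * (σ * σof f) = 1 := stab_eq_one hgood h3
      have h5 : σof (σ • f) = σ * σof f := by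
        rw [← mul_one (σof (σ • f)), ← h4]
        group
      have hsgn : ((Equiv.Perm.sign (σof (σ • f)) : ℤ) : ℚ)
          = ((Equiv.Perm.sign σ : ℤ) : ℚ) * ((Equiv.Perm.sign (σof f) : ℤ) : ℚ) := by
        rw [h5, map_mul]
        push_cast
        ring
      simp only [hvdef]
      rw [dif_pos hgood, dif_pos hgood']
      have hwcongr : w ⟨gof (σ • f), mem_Good.2 ⟨hrgs _, hgood'⟩⟩
          = w ⟨gof f, mem_Good.2 ⟨hrgs f, hgood⟩⟩ := by
        congr 1
        exact Subtype.ext hco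
      rw [hwcongr, hsgn]
      ring
    · have hgood' : ¬ k - 1 ≤ (img (gof (σ • f))).card := by rw [hco]; exact hgood
      simp only [hvdef]
      rw [dif_neg hgood, dif_neg hgood', mul_zero]
  refine ⟨⟨v, hv⟩, ?_⟩
  ext ⟨g, hgmem⟩
  obtain ⟨hgRGS, hggood⟩ := mem_Good.1 hgmem
  have hgofg : gof g = g := rgs_unique (hrgs g) hgRGS (σof g) (hdec g)
  have hstab : σof g = 1 := by
    have h' := hdec g
    rw [hgofg] at h'
    exact stab_eq_one hggood h' 
  have hgood : k - 1 ≤ (img (gof g)).card := by rw [hgofg]; exact hggood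
  show v g = w ⟨g, hgmem⟩
  rw [hvdef]
  simp only
  rw [dif_pos hgood]
  have hwcongr : w ⟨gof g, mem_Good.2 ⟨hrgs g, hgood⟩⟩ = w ⟨g, hgmem⟩ := by
    congr 1
    exact Subtype.ext hgofg
  rw [hwcongr, hstab]
  simp

lemma finrank_eq_card_Good :
    Module.finrank ℚ (signIsotypic k (Fin n → Fin k)) = (Good n k).card := by
  have e : signIsotypic k (Fin n → Fin k) ≃ₗ[ℚ] ({g // g ∈ Good n k} → ℚ) :=
    LinearEquiv.ofBijective resMap ⟨res_inj, res_surj⟩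
  rw [e.finrank_eq, Module.finrank_pi, Fintype.card_coe]


def cnt (n k j : ℕ) : ℕ :=
  (univ.filter fun f : Fin n → Fin k => IsRGS f ∧ (img f).card = j).card

lemma cnt_zero_left (k j : ℕ) : cnt 0 k j = stirling2 0 j := by
  cases j with
  | zero =>
    unfold cnt
    rw [Finset.filter_true_of_mem, card_univ]
    · simp [stirling2]
    · intro f _
      exact ⟨fun i => i.elim0, by simp [img]⟩
  | succ j =>
    unfold cnt
    rw [Finset.filter_false_of_mem, card_empty]
    · simp [stirling2]
    · rintro f - ⟨-, hcard⟩
      simp [img] at hcard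

lemma snoc_filter_iff {j : ℕ} (hj : j < k) (g : Fin n → Fin k) (c : Fin k) :
    (IsRGS (Fin.snoc g c) ∧ (img (Fin.snoc g c)).card = j + 1) ↔
      ((c : ℕ) < j + 1 ∧ (IsRGS g ∧ (img g).card = j + 1)) ∨
      (c = ⟨j, hj⟩ ∧ (IsRGS g ∧ (img g).card = j)) := by
  constructor
  · rintro ⟨hr, hcard⟩
    obtain ⟨hg, hc⟩ := isRGS_snoc.1 hr
    set m := (img g).card with hm
    have hcm : (c : ℕ) ≤ m := by
      by_contra hgt
      push_neg at hgt
      have hmk : m < k := lt_trans hgt c.isLt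
      have hmem : (⟨m, hmk⟩ : Fin k) ∈ img g := hc _ (by rw [Fin.lt_def]; exact hgt)
      rw [mem_img_iff hg] at hmem
      simp at hmem; omega
    rw [img_snoc] at hcard
    by_cases hlt : (c : ℕ) < m
    · have hcmem : c ∈ img g := (mem_img_iff hg).2 hlt
      rw [Finset.insert_eq_self.2 hcmem] at hcard
      exact .inl ⟨by omega, hg, hcard⟩
    · have hceq : (c : ℕ) = m := by omega
      have hcmem : c ∉ img g := by rw [mem_img_iff hg]; omega
      rw [Finset.card_insert_of_notMem hcmem] at hcard
      exact .inr ⟨Fin.ext (by simp only [hceq]; omega), hg, by omega⟩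
  · rintro (⟨hc, hg, hcard⟩ | ⟨rfl, hg, hcard⟩)
    · have hcmem : c ∈ img g := (mem_img_iff hg).2 (by omega)
      refine ⟨isRGS_snoc.2 ⟨hg, fun b hb => (mem_img_iff hg).2 ?_⟩, ?_⟩
      · rw [Fin.lt_def] at hb; omega
      · rw [img_snoc, Finset.insert_eq_self.2 hcmem, hcard]
    · have hcmem : (⟨j, hj⟩ : Fin k) ∉ img g := by rw [mem_img_iff hg]; simp; omega
      refine ⟨isRGS_snoc.2 ⟨hg, fun b hb => (mem_img_iff hg).2 ?_⟩, ?_⟩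
      · rw [Fin.lt_def] at hb; simp at hb; omega
      · rw [img_snoc, Finset.card_insert_of_notMem hcmem, hcard]

lemma card_small (k t : ℕ) (ht : t ≤ k) :
    (univ.filter fun c : Fin k => (c : ℕ) < t).card = t := by
  have key : (univ.filter fun c : Fin k => (c : ℕ) < t).card = (Finset.range t).card := by
    apply Finset.card_nbij (i := fun c : Fin k => (c : ℕ))
    · intro c hc
      replace hc : c ∈ univ ∧ (c : ℕ) < t := Finset.mem_filter.1 hc
      exact Finset.mem_range.2 hc.2
    · intro a _ b _ h
      exact Fin.ext h
    · intro m hm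
      simp only [Finset.coe_range, Set.mem_Iio] at hm
      refine ⟨⟨m, lt_of_lt_of_le hm ht⟩, ?_, rfl⟩
      simp [hm]
  rw [key, Finset.card_range]

lemma cnt_succ (n k j : ℕ) (hj : j + 1 ≤ k) :
    cnt (n + 1) k (j + 1) = (j + 1) * cnt n k (j + 1) + cnt n k j := by
  classical
  have hjk : j < k := hj
  unfold cnt
  have h1 : (univ.filter fun f : Fin (n+1) → Fin k =>
        IsRGS f ∧ (img f).card = j + 1).card
      = (univ.filter fun p : Fin k × (Fin n → Fin k) =>
          IsRGS (Fin.snoc p.2 p.1) ∧ (img (Fin.snoc p.2 p.1)).card = j + 1).card := by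
    apply Finset.card_bij' (fun f _ => (f (Fin.last n), Fin.init f))
        (fun p _ => Fin.snoc p.2 p.1)
    · intro f hf
      simp only [mem_filter, mem_univ, true_and] at hf ⊢
      rwa [Fin.snoc_init_self]
    · intro p hp
      simp only [mem_filter, mem_univ, true_and] at hp ⊢
      exact hp
    · intro f hf
      exact Fin.snoc_init_self f
    · intro p hp
      exact Prod.ext (by simp) (by simp)
  rw [h1]
  have h2 : (univ.filter fun p : Fin k × (Fin n → Fin k) =>
        IsRGS (Fin.snoc p.2 p.1) ∧ (img (Fin.snoc p.2 p.1)).card = j + 1)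
      = univ.filter fun p : Fin k × (Fin n → Fin k) =>
        (((p.1 : ℕ) < j + 1 ∧ (IsRGS p.2 ∧ (img p.2).card = j + 1)) ∨
         (p.1 = ⟨j, hjk⟩ ∧ (IsRGS p.2 ∧ (img p.2).card = j))) := by
    apply Finset.filter_congr
    intro p _
    exact (iff_iff_eq.1 (snoc_filter_iff hjk p.2 p.1)) ▸ Iff.rfl
  rw [h2, Finset.filter_or, Finset.card_union_of_disjoint]
  · congr 1
    · have hprod : (univ.filter fun p : Fin k × (Fin n → Fin k) =>
            (p.1 : ℕ) < j + 1 ∧ (IsRGS p.2 ∧ (img p.2).card = j + 1))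
          = (univ.filter fun c : Fin k => (c : ℕ) < j + 1) ×ˢ
            (univ.filter fun g : Fin n → Fin k => IsRGS g ∧ (img g).card = j + 1) := by
        ext p
        simp only [Finset.mem_filter, Finset.mem_product, Finset.mem_univ, true_and]
      rw [hprod, Finset.card_product, card_small k (j+1) hj]
    · have hprod : (univ.filter fun p : Fin k × (Fin n → Fin k) =>
            p.1 = ⟨j, hjk⟩ ∧ (IsRGS p.2 ∧ (img p.2).card = j))
          = (univ.filter fun c : Fin k => c = ⟨j, hjk⟩) ×ˢ
            (univ.filter fun g : Fin n → Fin k => IsRGS g ∧ (img g).card = j) := by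
        ext p
        simp only [Finset.mem_filter, Finset.mem_product, Finset.mem_univ, true_and]
      rw [hprod, Finset.card_product, Finset.filter_eq', if_pos (Finset.mem_univ _),
        Finset.card_singleton, one_mul]
  · rw [Finset.disjoint_left]
    rintro p hp1 hp2
    simp only [mem_filter] at hp1 hp2
    obtain ⟨-, -, -, h1'⟩ := hp1
    obtain ⟨-, -, -, h2'⟩ := hp2
    omega

lemma cnt_eq_stirling2 (n k : ℕ) : ∀ j ≤ k, cnt n k j = stirling2 n j := by
  induction n with
  | zero => intro j _; exact cnt_zero_left k j
  | succ n ih =>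
    intro j hj
    cases j with
    | zero =>
      show cnt (n + 1) k 0 = stirling2 (n + 1) 0
      unfold cnt
      rw [show stirling2 (n + 1) 0 = 0 from rfl, Finset.card_eq_zero,
        Finset.filter_eq_empty_iff]
      rintro f - ⟨-, hcard⟩
      have hmem : f 0 ∈ img f := mem_img.2 ⟨0, rfl⟩
      rw [Finset.card_eq_zero] at hcard
      rw [hcard] at hmem
      exact absurd hmem (Finset.notMem_empty _)
    | succ j =>
      rw [cnt_succ n k j hj, ih (j + 1) hj, ih j (Nat.le_of_succ_le hj)]
      rfl

end SignMult

/-- The multiplicity of the sign representation of `S_k` in `ℚ F([n],[k])`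
(with `S_k` acting by postcomposition) equals `S(n,k-1) + S(n,k)`. -/
theorem sign_multiplicity_in_functions (n k : ℕ) (hk : 1 ≤ k) :
    Module.finrank ℚ (signIsotypic k (Fin n → Fin k)) =
      stirling2 n (k - 1) + stirling2 n k := by
  classical
  open SignMult Finset in
  rw [SignMult.finrank_eq_card_Good]
  have hsplit : Good n k =
      (univ.filter fun f : Fin n → Fin k => IsRGS f ∧ (img f).card = k - 1) ∪
      (univ.filter fun f : Fin n → Fin k => IsRGS f ∧ (img f).card = k) := by
    ext f
    simp only [mem_Good, Finset.mem_union, Finset.mem_filter, Finset.mem_univ, true_and]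
    constructor
    · rintro ⟨h1, h2⟩
      have := img_card_le f
      by_cases hc : (img f).card = k
      · exact .inr ⟨h1, hc⟩
      · exact .inl ⟨h1, by omega⟩
    · rintro (⟨h1, h2⟩ | ⟨h1, h2⟩) <;> exact ⟨h1, by omega⟩
  rw [hsplit, Finset.card_union_of_disjoint]
  · rw [show ((univ.filter fun f : Fin n → Fin k =>
        IsRGS f ∧ (img f).card = k - 1).card) = cnt n k (k - 1) from rfl,
      show ((univ.filter fun f : Fin n → Fin k =>
        IsRGS f ∧ (img f).card = k).card) = cnt n k k from rfl,
      cnt_eq_stirling2 n k (k - 1) (by omega), cnt_eq_stirling2 n k k le_rfl]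
  · rw [Finset.disjoint_left]
    rintro f hf1 hf2
    simp only [Finset.mem_filter] at hf1 hf2
    obtain ⟨-, -, h1'⟩ := hf1
    obtain ⟨-, -, h2'⟩ := hf2
    omega
end

section
/- For $n > k+1 \geq 1$, let $\nu \in \mathbb{Q}\mathcal{F}([n],[n])$ (linear combinations of functions $[n]\to[n]$) be the expansion of the tensor $e_1 \otimes \cdots \otimes e_{n-k-1} \otimes (e_{n-k}-e_{n-k-1}) \otimes (e_{n-k+1}-e_{n-k}) \otimes \cdots \otimes (e_n - e_{n-1})$ under the identification of $\bigotimes^n \mathbb{Q}[n]$ with $\mathbb{Q}\mathcal{F}([n],[n])$ via one-line notation. Then for every function $f : [k] \to [n]$, the composite $f\nu$ (precomposition of each term of $\nu$ with $f$, extended linearly) equals 0. -/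
/-- The identification of `⨂^n ℚ[n]` with `ℚ F([n],[n])` via one-line notation. -/
noncomputable def tensorExpand (n : ℕ) (v : Fin n → Fin n → ℚ) : (Fin n → Fin n) →₀ ℚ :=
  Finsupp.equivFunOnFinite.symm (fun g => ∏ i, v i (g i))

lemma mapDomain_apply_fintype {α β : Type*} [Fintype α] [DecidableEq β]
    (F : α → β) (l : α →₀ ℚ) (b : β) :
    Finsupp.mapDomain F l b = ∑ a : α, if F a = b then l a else 0 := by
  classical
  rw [Finsupp.mapDomain, Finsupp.sum, Finsupp.finset_sum_apply]
  rw [Finset.sum_subset (Finset.subset_univ _)]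
  · exact Finset.sum_congr rfl fun a _ => Finsupp.single_apply
  · intro a _ ha
    simp [Finsupp.notMem_support_iff.mp ha]

/-- For `n > k + 1`, the element `ν` of `ℚ F([n],[n])` which is the expansion of the
tensor `e_1 ⊗ ⋯ ⊗ e_{n-k-1} ⊗ (e_{n-k} - e_{n-k-1}) ⊗ ⋯ ⊗ (e_n - e_{n-1})`
(in 0-indexed form: the `i`-th factor is `e_i` for `i < n-k-1`, and `e_i - e_{i-1}` for
`i ≥ n-k-1`) annihilates every function `f : [k] → [n]` under precomposition. -/
theorem upper_squisher_annihilates (n k : ℕ) (h : k + 1 < n) (f : Fin k → Fin n) :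
    Finsupp.lmapDomain ℚ ℚ (fun g : Fin n → Fin n => g ∘ f)
      (tensorExpand n (fun i j =>
        (if j = i then (1 : ℚ) else 0) -
          (if n - k - 1 ≤ (i : ℕ) ∧ (j : ℕ) + 1 = (i : ℕ) then 1 else 0))) = 0 := by
  classical
  set v : Fin n → Fin n → ℚ := fun i j =>
    (if j = i then (1 : ℚ) else 0) -
      (if n - k - 1 ≤ (i : ℕ) ∧ (j : ℕ) + 1 = (i : ℕ) then 1 else 0) with hv
  -- find an index m ≥ n-k-1 missed by f
  obtain ⟨m, hm1, hm2⟩ : ∃ m : Fin n, n - k - 1 ≤ (m : ℕ) ∧ ∀ i, f i ≠ m := by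
    have hlt : n - k - 1 < n := by omega
    have hS : Finset.univ.filter (fun j : Fin n => n - k - 1 ≤ (j : ℕ))
        = Finset.Ici (⟨n - k - 1, hlt⟩ : Fin n) := by
      ext j; simp [Fin.le_def]
    have hcard : (Finset.univ.filter (fun j : Fin n => n - k - 1 ≤ (j : ℕ))).card = k + 1 := by
      rw [hS, Fin.card_Ici]; simp only [Fin.val_mk]; omega
    have himg : (Finset.univ.image f).card ≤ k := by
      refine le_trans Finset.card_image_le ?_
      simp
    have hne : ((Finset.univ.filter (fun j : Fin n => n - k - 1 ≤ (j : ℕ)))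
        \ (Finset.univ.image f)).Nonempty := by
      apply Finset.card_pos.mp
      have := Finset.le_card_sdiff (Finset.univ.image f)
        (Finset.univ.filter (fun j : Fin n => n - k - 1 ≤ (j : ℕ)))
      omega
    obtain ⟨m, hm⟩ := hne
    rw [Finset.mem_sdiff, Finset.mem_filter] at hm
    refine ⟨m, hm.1.2, fun i hi => hm.2 ?_⟩
    exact Finset.mem_image.mpr ⟨i, Finset.mem_univ i, hi⟩
  -- column sum of row m is zero
  have hsum : ∑ x : Fin n, v m x = 0 := by
    have hm0 : 1 ≤ (m : ℕ) := by omega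
    set x0 : Fin n := ⟨(m : ℕ) - 1, by omega⟩ with hx0
    have hiff : ∀ x : Fin n, ((x : ℕ) + 1 = (m : ℕ)) ↔ x = x0 := by
      intro x; rw [Fin.ext_iff]; simp [hx0]; omega
    simp only [hv]
    rw [Finset.sum_sub_distrib]
    have h1 : ∑ x : Fin n, (if x = m then (1:ℚ) else 0) = 1 := by simp
    have h2 : ∑ x : Fin n, (if n - k - 1 ≤ (m : ℕ) ∧ (x : ℕ) + 1 = (m : ℕ) then (1:ℚ) else 0)
        = 1 := by
      have : ∀ x : Fin n, (if n - k - 1 ≤ (m : ℕ) ∧ (x : ℕ) + 1 = (m : ℕ) then (1:ℚ) else 0)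
          = (if x = x0 then (1:ℚ) else 0) := by
        intro x
        simp [hm1, hiff x]
      rw [Finset.sum_congr rfl fun x _ => this x]
      simp
    rw [h1, h2]; ring
  ext h'
  rw [Finsupp.lmapDomain_apply, mapDomain_apply_fintype, Finsupp.coe_zero, Pi.zero_apply]
  have htE : ∀ g : Fin n → Fin n, tensorExpand n v g = ∏ i, v i (g i) := by
    intro g; simp [tensorExpand]
  simp only [htE]
  -- split the sum using funSplitAt
  rw [← Equiv.sum_comp (Equiv.funSplitAt m (Fin n)).symm
    (fun g => if g ∘ f = h' then ∏ i, v i (g i) else 0)]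
  rw [Fintype.sum_prod_type]
  have key : ∀ g' : { j : Fin n // j ≠ m } → Fin n,
      ∑ x : Fin n, (if ((Equiv.funSplitAt m (Fin n)).symm (x, g')) ∘ f = h'
        then ∏ i, v i (((Equiv.funSplitAt m (Fin n)).symm (x, g')) i) else 0) = 0 := by
    intro g'
    have hval : ∀ x : Fin n, ∀ j : Fin n, (hj : j ≠ m) →
        (Equiv.funSplitAt m (Fin n)).symm (x, g') j = g' ⟨j, hj⟩ := by
      intro x j hj
      simp [Equiv.funSplitAt, Equiv.piSplitAt, hj]
    have hvalm : ∀ x : Fin n, (Equiv.funSplitAt m (Fin n)).symm (x, g') m = x := by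
      intro x
      simp [Equiv.funSplitAt, Equiv.piSplitAt]
    have hcond : ∀ x : Fin n,
        (((Equiv.funSplitAt m (Fin n)).symm (x, g')) ∘ f = h')
          ↔ ((fun i => g' ⟨f i, hm2 i⟩) = h') := by
      intro x
      constructor <;> intro hc <;> rw [← hc] <;> ext i <;>
        simp [Function.comp, hval x (f i) (hm2 i)]
    have hprod : ∀ x : Fin n,
        ∏ i, v i (((Equiv.funSplitAt m (Fin n)).symm (x, g')) i)
          = v m x * ∏ j : { j : Fin n // j ≠ m }, v j (g' j) := by
      intro x
      rw [Fintype.prod_eq_mul_prod_compl m]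
      rw [hvalm x]
      congr 1
      rw [Finset.prod_subtype (p := fun j => j ≠ m) ({m}ᶜ : Finset (Fin n)) (by simp)
        (fun j => v j (((Equiv.funSplitAt m (Fin n)).symm (x, g')) j))]
      exact Finset.prod_congr rfl fun j _ => by rw [hval x j j.2]
    by_cases hC : (fun i => g' ⟨f i, hm2 i⟩) = h'
    · simp only [hcond, hC, if_true, hprod]
      rw [← Finset.sum_mul, hsum, zero_mul]
    · simp only [hcond, hC, if_false]
      simp
  rw [Finset.sum_comm]
  simp only [key]
  simp
end
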